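/- Let α > 0 and θ ∈ ℝ^m. Let f : ℝ^m → ℝ satisfy f(w) ≤ (α/2)‖w‖² for all w ∈ ℝ^m. Suppose z, q ∈ ℝ^m are such that q is a subgradient of f at z (f(w) ≥ f(z) + ⟪q, w − z⟫ for all w) and f(z) ≥ −⟪z, θ⟫ − ‖θ‖²/(2α). Then (1/(4α))·‖q‖² ≤ α‖z‖² + ⟪z, θ⟫ + ‖θ‖²/(2α). -/

import Mathlib

open scoped RealInnerProductSpace

/-- Pointwise bound on the optimal dual density: if `f(w) ≤ (α/2)‖w‖²` for all `w`,
`q` is a subgradient of `f` at `z`, and `f(z) ≥ −⟪z,θ⟫ − ‖θ‖²/(2α)`, then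
`(1/(4α))‖q‖² ≤ α‖z‖² + ⟪z,θ⟫ + ‖θ‖²/(2α)`. -/
theorem stmt_8 {m : ℕ} (α : ℝ) (hα : 0 < α) (θ : EuclideanSpace ℝ (Fin m))
    (f : EuclideanSpace ℝ (Fin m) → ℝ)
    (hupper : ∀ w : EuclideanSpace ℝ (Fin m), f w ≤ α / 2 * ‖w‖ ^ 2)
    (z q : EuclideanSpace ℝ (Fin m))
    (hsub : ∀ w : EuclideanSpace ℝ (Fin m), f z + ⟪q, w - z⟫ ≤ f w)
    (hlower : -⟪z, θ⟫ - ‖θ‖ ^ 2 / (2 * α) ≤ f z) :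
    1 / (4 * α) * ‖q‖ ^ 2 ≤ α * ‖z‖ ^ 2 + ⟪z, θ⟫ + ‖θ‖ ^ 2 / (2 * α) := by
  have hαne : α ≠ 0 := ne_of_gt hα
  have h1 := hsub ((α⁻¹ : ℝ) • q)
  have h2 := hupper ((α⁻¹ : ℝ) • q)
  have hiq : ⟪q, (α⁻¹ : ℝ) • q - z⟫ = α⁻¹ * ‖q‖ ^ 2 - ⟪q, z⟫ := by
    rw [inner_sub_right, real_inner_smul_right, real_inner_self_eq_norm_sq]
  have hn : ‖(α⁻¹ : ℝ) • q‖ = α⁻¹ * ‖q‖ := by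
    rw [norm_smul, Real.norm_eq_abs, abs_of_pos (inv_pos.mpr hα)]
  have hcs : ⟪q, z⟫ ≤ ‖q‖ * ‖z‖ := real_inner_le_norm q z
  rw [hn] at h2
  rw [hiq] at h1
  have e1 : α⁻¹ * ‖q‖ ^ 2 = ‖q‖ ^ 2 / (2 * α) + ‖q‖ ^ 2 / (2 * α) := by
    field_simp; ring
  have e2 : α / 2 * (α⁻¹ * ‖q‖) ^ 2 = ‖q‖ ^ 2 / (2 * α) := by
    field_simp
  have key : ‖q‖ ^ 2 / (2 * α) ≤ ⟪q, z⟫ - f z := by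
    have := le_trans h1 h2
    rw [e2] at this; linarith [e1 ▸ this]
  have e3 : (‖q‖ ^ 2 / (4 * α) + α * ‖z‖ ^ 2) - ‖q‖ * ‖z‖
      = (‖q‖ - 2 * α * ‖z‖) ^ 2 / (4 * α) := by
    field_simp; ring
  have hq2 : ‖q‖ * ‖z‖ ≤ ‖q‖ ^ 2 / (4 * α) + α * ‖z‖ ^ 2 := by
    have := div_nonneg (sq_nonneg (‖q‖ - 2 * α * ‖z‖)) (by positivity : (0:ℝ) ≤ 4 * α)
    linarith [e3 ▸ this]
  have e4 : ‖q‖ ^ 2 / (2 * α) - ‖q‖ ^ 2 / (4 * α) = 1 / (4 * α) * ‖q‖ ^ 2 := by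
    field_simp; ring
  linarith [e4 ▸ (by linarith [key, hq2, hcs, hlower] :
    ‖q‖ ^ 2 / (2 * α) - ‖q‖ ^ 2 / (4 * α) ≤ α * ‖z‖ ^ 2 + ⟪z, θ⟫ + ‖θ‖ ^ 2 / (2 * α))]
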